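/- arXiv:1910.04246 — 5 statements merged into one kernel-verified Lean document; each statement's English description precedes it below -/
import Mathlib

section
/- Let R be a principal ideal domain and let C be a finitely generated free R-module equipped with an R-linear map ∂ : C → C satisfying ∂ ∘ ∂ = 0. Let H = ker ∂ / im ∂, regarded as a differential R-module with zero differential. Then there exists an R-linear map f : C → H such that f ∘ ∂ = 0 (so f is a chain map from (C, ∂) to (H, 0)) and f is a quasi-isomorphism; concretely, the restriction of f to ker ∂ is surjective onto H, and an element c ∈ ker ∂ satisfies f(c) = 0 if and only if c ∈ im ∂. -/
/-- **Formality of differential modules over a PID.**  If `C` is a finitely generated free module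
over a PID `R` with an `R`-linear differential `∂` (so `∂ ∘ ∂ = 0`), and
`H = ker ∂ ⧸ im ∂` is its homology, then there is an `R`-linear chain map
`f : (C, ∂) → (H, 0)` (i.e. `f ∘ ∂ = 0`) which is a quasi-isomorphism: the restriction of `f`
to `ker ∂` surjects onto `H`, and a cycle is sent to `0` exactly when it is a boundary. -/
theorem pid_differential_module_formal
    (R : Type) [CommRing R] [IsDomain R] [IsPrincipalIdealRing R]
    (C : Type) [AddCommGroup C] [Module R C] [Module.Free R C] [Module.Finite R C]
    (d : C →ₗ[R] C) (hd : d ∘ₗ d = 0) :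
    ∃ f : C →ₗ[R]
        (LinearMap.ker d ⧸ (LinearMap.range d).comap (LinearMap.ker d).subtype),
      f ∘ₗ d = 0 ∧
      (∀ h : LinearMap.ker d ⧸ (LinearMap.range d).comap (LinearMap.ker d).subtype,
        ∃ c ∈ LinearMap.ker d, f c = h) ∧
      (∀ c ∈ LinearMap.ker d, (f c = 0 ↔ c ∈ LinearMap.range d)) := by
  set K := LinearMap.ker d
  set B := (LinearMap.range d).comap K.subtype
  haveI : Module.IsTorsionFree R C := inferInstance
  haveI : Module.Free R (C ⧸ K) := Module.Free.of_equiv d.quotKerEquivRange.symm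
  haveI : Module.Projective R (C ⧸ K) := inferInstance
  obtain ⟨s, hs⟩ := Module.projective_lifting_property K.mkQ (LinearMap.id (M := C ⧸ K))
    (Submodule.mkQ_surjective K)
  -- retraction r : C → K
  have hmem : ∀ x : C, x - s (K.mkQ x) ∈ K := by
    intro x
    have h1 : K.mkQ (x - s (K.mkQ x)) = 0 := by
      have h2 := congrArg (fun g => g (K.mkQ x)) hs
      simp only [LinearMap.comp_apply, LinearMap.id_apply] at h2
      rw [map_sub, h2, sub_self]
    rwa [← LinearMap.mem_ker, Submodule.ker_mkQ] at h1
  let r : C →ₗ[R] K := LinearMap.codRestrict K (LinearMap.id - s ∘ₗ K.mkQ) (by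
    intro x; simpa using hmem x)
  have hrK : ∀ x : C, x ∈ K → (r x : C) = x := by
    intro x hx
    simp only [r, LinearMap.codRestrict_apply, LinearMap.sub_apply, LinearMap.id_apply,
      LinearMap.comp_apply]
    have : K.mkQ x = 0 := (Submodule.Quotient.mk_eq_zero K).2 hx
    simp [this]
  refine ⟨B.mkQ ∘ₗ r, ?_, ?_, ?_⟩
  · ext x
    have hdx : d x ∈ K := by
      simp [K, LinearMap.mem_ker]
      exact congrFun (congrArg DFunLike.coe hd) x
    have hr : (r (d x) : C) = d x := hrK _ hdx
    have : r (d x) ∈ B := by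
      simp [B, Submodule.mem_comap, hr]
    simpa [Submodule.Quotient.mk_eq_zero] using (Submodule.Quotient.mk_eq_zero B).2 this
  · intro h
    obtain ⟨k, rfl⟩ := Submodule.mkQ_surjective B h
    refine ⟨(k : C), k.2, ?_⟩
    have : r (k : C) = k := Subtype.ext (hrK _ k.2)
    simp [this]
  · intro c hc
    have hrc : r c = ⟨c, hc⟩ := Subtype.ext (hrK _ hc)
    constructor
    · intro h0
      have : r c ∈ B := by
        have := (Submodule.Quotient.mk_eq_zero B).1 (by simpa using h0)
        exact this
      rw [hrc] at this
      simpa [B, Submodule.mem_comap] using this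
    · intro hcr
      have : r c ∈ B := by rw [hrc]; simpa [B, Submodule.mem_comap] using hcr
      simpa [Submodule.Quotient.mk_eq_zero] using (Submodule.Quotient.mk_eq_zero B).2 this
end

section
/- Let R be a principal ideal domain and let C be a finitely generated free R-module equipped with an R-linear map ∂ : C → C satisfying ∂ ∘ ∂ = 0. Then C decomposes as a direct sum of two-step complexes and trivial summands: there exist natural numbers p and m, a basis b₁, …, b_p, c₁, …, c_p, d₁, …, d_m of C over R, and elements q₁, …, q_p ∈ R, such that ∂(bᵢ) = qᵢ · cᵢ for all i, ∂(cᵢ) = 0 for all i, and ∂(dⱼ) = 0 for all j. -/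
/-- **Decomposition of a differential module over a PID into two-step complexes.**
If `C` is a finitely generated free module over a PID `R` and `∂ : C → C` is an `R`-linear map
with `∂ ∘ ∂ = 0`, then there are `p, m : ℕ`, a basis `b₁, …, b_p, c₁, …, c_p, d₁, …, d_m` of
`C`, and scalars `q₁, …, q_p ∈ R` with `∂ bᵢ = qᵢ • cᵢ`, `∂ cᵢ = 0` and `∂ dⱼ = 0`. -/
theorem pid_differential_module_two_step_decomposition
    (R : Type) [CommRing R] [IsDomain R] [IsPrincipalIdealRing R]
    (C : Type) [AddCommGroup C] [Module R C] [Module.Free R C] [Module.Finite R C]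
    (d : C →ₗ[R] C) (hd : d ∘ₗ d = 0) :
    ∃ (p m : ℕ) (B : Module.Basis (Fin p ⊕ Fin p ⊕ Fin m) R C) (q : Fin p → R),
      (∀ i : Fin p, d (B (Sum.inl i)) = q i • B (Sum.inr (Sum.inl i))) ∧
      (∀ i : Fin p, d (B (Sum.inr (Sum.inl i))) = 0) ∧
      (∀ j : Fin m, d (B (Sum.inr (Sum.inr j))) = 0) := by
  classical
  -- the range of `d` is contained in its kernel
  have hdd : ∀ x : C, d (d x) = 0 := fun x => congrFun (congrArg DFunLike.coe hd) x
  have hNK : LinearMap.range d ≤ LinearMap.ker d := by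
    rintro y ⟨x, rfl⟩
    exact hdd x
  obtain ⟨ι, b0⟩ := Module.Free.exists_basis (R := R) (M := C)
  haveI : Finite ι := Module.Finite.finite_basis b0
  -- Smith normal form of `range d ≤ ker d`
  obtain ⟨p, k, hpk, bK, bN, q, hsnf⟩ :=
    (LinearMap.range d).exists_smith_normal_form_of_le b0 (LinearMap.ker d) hNK
  -- `q i ≠ 0`
  have hq : ∀ i, q i ≠ 0 := by
    intro i hqi
    have : (bN i : C) = 0 := by rw [hsnf i, hqi, zero_smul]
    exact bN.ne_zero i (Subtype.ext this)
  -- choose preimages of the basis of the range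
  have hx : ∀ i : Fin p, ∃ x : C, d x = (bN i : C) := fun i => (bN i).2
  choose x hxd using hx
  -- the coerced basis of the kernel is linearly independent in `C`
  have L : LinearIndependent R (fun j : Fin k => ((bK j : C))) :=
    bK.linearIndependent.map' (LinearMap.ker d).subtype (Submodule.ker_subtype _)
  -- index bookkeeping
  set m := k - p with hm
  have hkm : p + m = k := by omega
  let e : Fin p ⊕ Fin m ≃ Fin k := finSumFinEquiv.trans (finCongr hkm)
  have he : ∀ i : Fin p, e (Sum.inl i) = Fin.castLE hpk i := by
    intro i; apply Fin.ext; simp [e]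
  -- the candidate basis family
  let v : Fin p ⊕ Fin p ⊕ Fin m → C := fun s =>
    match s with
    | Sum.inl i => x i
    | Sum.inr s => (bK (e s) : C)
  have hvker : ∀ s : Fin p ⊕ Fin m, d (v (Sum.inr s)) = 0 := fun s => (bK (e s)).2
  -- linear independence
  have hli : LinearIndependent R v := by
    rw [Fintype.linearIndependent_iff]
    intro c hc
    have hvker' : ∀ s : Fin p ⊕ Fin m, d ((bK (e s) : C)) = 0 := fun s => (bK (e s)).2
    rw [Fintype.sum_sum_type, Fintype.sum_sum_type] at hc
    have hsum := hc
    -- apply d to kill the kernel part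
    have h1 : ∑ i : Fin p, (c (Sum.inl i) * q i) • ((bK (Fin.castLE hpk i) : C)) = 0 := by
      have := congrArg d hsum
      simp only [v, map_add, map_sum, map_smul, map_zero, hxd, hvker', smul_zero,
        Finset.sum_const_zero, add_zero] at this
      calc ∑ i : Fin p, (c (Sum.inl i) * q i) • ((bK (Fin.castLE hpk i) : C))
          = ∑ i : Fin p, c (Sum.inl i) • (bN i : C) := by
            refine Finset.sum_congr rfl fun i _ => ?_
            rw [hsnf i, mul_smul]
        _ = 0 := this
    have L1 : LinearIndependent R (fun i : Fin p => ((bK (Fin.castLE hpk i) : C))) :=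
      L.comp (Fin.castLE hpk) (Fin.castLE_injective hpk)
    have hcq : ∀ i : Fin p, c (Sum.inl i) * q i = 0 :=
      Fintype.linearIndependent_iff.mp L1 _ h1
    have hcl : ∀ i : Fin p, c (Sum.inl i) = 0 := fun i =>
      (mul_eq_zero.mp (hcq i)).resolve_right (hq i)
    have h2 : ∑ s : Fin p ⊕ Fin m, c (Sum.inr s) • ((bK (e s) : C)) = 0 := by
      have hz : (∑ i : Fin p, c (Sum.inl i) • x i) = 0 := by
        refine Finset.sum_eq_zero fun i _ => ?_
        rw [hcl i, zero_smul]
      rw [Fintype.sum_sum_type]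
      rwa [hz, zero_add] at hsum
    have L2 : LinearIndependent R (fun s : Fin p ⊕ Fin m => ((bK (e s) : C))) :=
      L.comp e e.injective
    have hcr : ∀ s : Fin p ⊕ Fin m, c (Sum.inr s) = 0 :=
      Fintype.linearIndependent_iff.mp L2 _ h2
    rintro (i | s)
    · exact hcl i
    · exact hcr s
  -- spanning
  have hsp : ⊤ ≤ Submodule.span R (Set.range v) := by
    intro y _
    set S := Submodule.span R (Set.range v) with hS
    have hxS : ∀ i : Fin p, x i ∈ S := fun i =>
      Submodule.subset_span ⟨Sum.inl i, rfl⟩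
    have hKS : ∀ z : C, z ∈ LinearMap.ker d → z ∈ S := by
      intro z hz
      have : (⟨z, hz⟩ : LinearMap.ker d) =
          ∑ j : Fin k, bK.repr ⟨z, hz⟩ j • bK j := (bK.sum_repr ⟨z, hz⟩).symm
      have hz' : z = ∑ j : Fin k, bK.repr ⟨z, hz⟩ j • (bK j : C) := by
        have := congrArg (Subtype.val) this
        simpa only [Submodule.coe_sum, Submodule.coe_smul] using this
      rw [hz']
      refine Submodule.sum_mem _ fun j _ => Submodule.smul_mem _ _ ?_
      exact Submodule.subset_span ⟨Sum.inr (e.symm j), by simp [v]⟩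
    -- write `d y` in terms of the basis of the range
    have hy : d y ∈ LinearMap.range d := ⟨y, rfl⟩
    set u : C := ∑ i : Fin p, bN.repr ⟨d y, hy⟩ i • x i with hu
    have hdu : d u = d y := by
      have : (⟨d y, hy⟩ : LinearMap.range d) =
          ∑ i : Fin p, bN.repr ⟨d y, hy⟩ i • bN i := (bN.sum_repr ⟨d y, hy⟩).symm
      have h' : d y = ∑ i : Fin p, bN.repr ⟨d y, hy⟩ i • (bN i : C) := by
        have := congrArg (Subtype.val) this
        simpa only [Submodule.coe_sum, Submodule.coe_smul] using this
      rw [hu, map_sum]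
      simp only [map_smul, hxd]
      exact h'.symm
    have huS : u ∈ S := Submodule.sum_mem _ fun i _ => Submodule.smul_mem _ _ (hxS i)
    have : y - u ∈ S := hKS _ (by simp [LinearMap.mem_ker, map_sub, hdu])
    have := Submodule.add_mem _ this huS
    simpa using this
  -- assemble the basis
  let B : Module.Basis (Fin p ⊕ Fin p ⊕ Fin m) R C := Module.Basis.mk hli hsp
  have hB : ∀ s, B s = v s := fun s => Module.Basis.mk_apply hli hsp s
  refine ⟨p, m, B, q, ?_, ?_, ?_⟩
  · intro i
    rw [hB, hB]
    show d (x i) = q i • ((bK (e (Sum.inl i)) : C))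
    rw [hxd, hsnf i, he i]
  · intro i
    rw [hB]
    exact hvker (Sum.inl i)
  · intro j
    rw [hB]
    exact hvker (Sum.inr j)
end

section
/- Let F be a field, let S = F[ε] be the ring of dual numbers over F (i.e. F[X]/(X²) with ε² = 0), and let M be an S-module that is finite-dimensional as an F-vector space. Then M is a free S-module if and only if dim_F(M) = 2·dim_F(ε·M), where ε·M denotes the image of the F-linear map M → M given by multiplication by ε. -/
open TrivSqZeroExt

/-- **Freeness over the dual numbers via dimensions.**  Let `F` be a field, `S = F[ε]` the ring
of dual numbers over `F`, and `M` an `S`-module which is finite dimensional as an `F`-vector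
space.  Then `M` is a free `S`-module if and only if `dim_F M = 2·dim_F(ε·M)`, where `ε·M`
is the image of the `F`-linear endomorphism of `M` given by multiplication by `ε`. -/
theorem free_over_dual_numbers_iff_dim
    (F : Type) [Field F]
    (M : Type) [AddCommGroup M] [Module F M]
    [Module (DualNumber F) M] [IsScalarTower F (DualNumber F) M]
    [Module.Finite F M]
    (epsM : M →ₗ[F] M)
    (hepsM : ∀ m : M, epsM m = (DualNumber.eps : DualNumber F) • m) :
    Module.Free (DualNumber F) M ↔
      Module.finrank F M = 2 * Module.finrank F (LinearMap.range epsM) := by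
  classical
  have expand : ∀ (s : DualNumber F) (x : M),
      s • x = s.fst • x + s.snd • epsM x := by
    intro s x
    conv_lhs => rw [← TrivSqZeroExt.inl_fst_add_inr_snd_eq s]
    rw [add_smul, DualNumber.inr_eq_smul_eps, ← TrivSqZeroExt.algebraMap_eq_inl,
      algebraMap_smul, smul_assoc, hepsM]
  have heps2 : ∀ m : M, epsM (epsM m) = 0 := by
    intro m
    rw [hepsM (epsM m), hepsM, smul_smul, DualNumber.eps_mul_eps, zero_smul]
  have hrange_le_ker : LinearMap.range epsM ≤ LinearMap.ker epsM := by
    rintro x ⟨y, rfl⟩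
    exact heps2 y
  have hrn := LinearMap.finrank_range_add_finrank_ker epsM
  constructor
  · intro hfree
    have hker_le : LinearMap.ker epsM ≤ LinearMap.range epsM := by
      intro m hm
      have hm' : (DualNumber.eps : DualNumber F) • m = 0 := by
        rw [← hepsM]; exact hm
      let b := Module.Free.chooseBasis (DualNumber F) M
      set l := b.repr m with hl
      have hεl : (DualNumber.eps : DualNumber F) • l = 0 := by
        rw [hl, ← map_smul, hm', map_zero]
      have hfst : ∀ i, (l i).fst = 0 := by
        intro i
        have h1 := DFunLike.congr_fun hεl i
        have h2 : ((DualNumber.eps : DualNumber F) * l i).snd = 0 := by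
          rw [show (DualNumber.eps : DualNumber F) * l i = 0 from h1]
          rfl
        simpa using h2
      refine ⟨b.repr.symm (l.mapRange (fun s => TrivSqZeroExt.inl s.snd) (by simp)), ?_⟩
      rw [hepsM, ← map_smul]
      have : (DualNumber.eps : DualNumber F) •
          (l.mapRange (fun s => TrivSqZeroExt.inl s.snd) (by simp)) = l := by
        refine Finsupp.ext fun i => ?_
        simp only [Finsupp.smul_apply, Finsupp.mapRange_apply]
        refine TrivSqZeroExt.ext ?_ ?_
        · simp [hfst i]
        · simp
          exact congrArg TrivSqZeroExt.fst (Finsupp.mapRange_apply (f := fun s : DualNumber F => (TrivSqZeroExt.inl s.snd : DualNumber F)) (g := l) (a := i))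
      rw [this, hl, LinearEquiv.symm_apply_apply]
    have hkr : LinearMap.ker epsM = LinearMap.range epsM :=
      le_antisymm hker_le hrange_le_ker
    rw [hkr] at hrn
    omega
  · intro h
    have hkr : LinearMap.range epsM = LinearMap.ker epsM :=
      Submodule.eq_of_le_of_finrank_le hrange_le_ker (by omega)
    -- basis of the range
    set K := LinearMap.range epsM with hK
    let c := Module.finBasis F K
    have hc : ∀ i, ∃ x, epsM x = (c i : M) := fun i => (c i).2
    choose v hv using hc
    have hcoe_li : LinearIndependent F (fun i => (c i : M)) := by
      have := c.linearIndependent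
      exact this.map' K.subtype (Submodule.ker_subtype K)
    have hli : LinearIndependent (DualNumber F) v := by
      rw [Fintype.linearIndependent_iff]
      intro g hg
      have hg' : ∑ i, ((g i).fst • v i + (g i).snd • epsM (v i)) = 0 := by
        rw [← hg]
        exact Finset.sum_congr rfl fun i _ => (expand (g i) (v i)).symm
      have hg2 : ∑ i, (g i).fst • epsM (v i) = 0 := by
        have := congrArg epsM hg'
        rw [map_sum, map_zero] at this
        simpa [heps2] using this
      have hfst : ∀ i, (g i).fst = 0 := by
        have := Fintype.linearIndependent_iff.mp hcoe_li (fun i => (g i).fst)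
        refine this ?_
        simpa [hv] using hg2
      have hsnd : ∀ i, (g i).snd = 0 := by
        have h3 : ∑ i, (g i).snd • epsM (v i) = 0 := by
          have := hg'
          simp only [hfst, zero_smul, zero_add] at this
          exact this
        have := Fintype.linearIndependent_iff.mp hcoe_li (fun i => (g i).snd)
        refine this ?_
        simpa [hv] using h3
      intro i
      refine TrivSqZeroExt.ext ?_ ?_
      · exact hfst i
      · exact hsnd i
    have hKle : (K : Set M) ⊆ (Submodule.span (DualNumber F) (Set.range v) : Set M) := by
      intro x hx
      have hxK : x ∈ K := hx
      have hrepr : ∑ i, (c.repr ⟨x, hxK⟩ i) • (c i : M) = x := by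
        have := c.sum_repr ⟨x, hxK⟩
        calc ∑ i, (c.repr ⟨x, hxK⟩ i) • (c i : M)
            = ((∑ i, (c.repr ⟨x, hxK⟩ i) • c i : K) : M) := by
              push_cast; rfl
          _ = x := by rw [this]
      rw [← hrepr]
      refine Submodule.sum_mem _ fun i _ => ?_
      rw [← hv i, hepsM, ← algebraMap_smul (DualNumber F) (c.repr ⟨x, hxK⟩ i), smul_smul]
      exact Submodule.smul_mem _ _ (Submodule.subset_span ⟨i, rfl⟩)
    have hspan : ⊤ ≤ Submodule.span (DualNumber F) (Set.range v) := by
      intro m _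
      set a : _ → F := fun i => c.repr ⟨epsM m, ⟨m, rfl⟩⟩ i with ha
      set m₀ : M := ∑ i, a i • v i with hm₀
      have hmm : epsM (m - m₀) = 0 := by
        have h1 : epsM m₀ = ∑ i, a i • (c i : M) := by
          rw [hm₀, map_sum]
          exact Finset.sum_congr rfl fun i _ => by rw [map_smul, hv]
        have h2 : ∑ i, a i • (c i : M) = epsM m := by
          have := c.sum_repr ⟨epsM m, ⟨m, rfl⟩⟩
          calc ∑ i, a i • (c i : M)
              = ((∑ i, a i • c i : K) : M) := by push_cast; rfl
            _ = epsM m := by rw [ha] at *; rw [this]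
        rw [map_sub, h1, h2, sub_self]
      have hmem : m - m₀ ∈ K := by
        have h4 : m - m₀ ∈ LinearMap.ker epsM := hmm
        rwa [← hkr] at h4
      have h₀mem : m₀ ∈ Submodule.span (DualNumber F) (Set.range v) := by
        refine Submodule.sum_mem _ fun i _ => ?_
        rw [← algebraMap_smul (DualNumber F) (a i)]
        exact Submodule.smul_mem _ _ (Submodule.subset_span ⟨i, rfl⟩)
      have := Submodule.add_mem _ (hKle hmem) h₀mem
      simpa using this
    exact Module.Free.of_basis (Module.Basis.mk hli hspan)
end

section
/- Let k be a commutative ring, let (D_n)_{n ∈ ℕ} be a family of Hasse derivatives on the Laurent polynomial ring k[T, T⁻¹], let a ∈ k be a unit, and let φ : k[T, T⁻¹] → k be a k-algebra homomorphism with φ(T) = a. If p ∈ k[T, T⁻¹] satisfies φ(D_n(p)) = 0 for every n ∈ ℕ, then p = 0. -/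
open LaurentPolynomial

open Finset in
private lemma core_vanish {k : Type} [CommRing k] (S : Finset ℤ) (f : ℤ → k)
    (h : ∀ n : ℕ, ∑ m ∈ S, f m * ((Ring.choose m n : ℤ) : k) = 0) :
    ∀ m ∈ S, f m = 0 := by
  induction S using Finset.strongInduction with
  | _ S ih =>
    intro m hm
    have hS : S.Nonempty := ⟨m, hm⟩
    set M := S.max' hS with hM
    set m1 := S.min' hS with hm1
    set d := (M - m1).toNat with hd
    have hMS : M ∈ S := S.max'_mem hS
    have hcast : ∀ x ∈ S, ((Ring.choose (x - m1) d : ℤ) : k)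
        = ((Nat.choose (x - m1).toNat d : ℤ) : k) := by
      intro x hx
      have h0 : (0:ℤ) ≤ x - m1 := by
        have := S.min'_le x hx; omega
      conv_lhs => rw [show x - m1 = ((x - m1).toNat : ℤ) from (Int.toNat_of_nonneg h0).symm,
        Ring.choose_natCast]
    have comb : ∀ n : ℕ, ∑ x ∈ S, f x * ((Ring.choose (x - m1) n : ℤ) : k) = 0 := by
      intro n
      have hch : ∀ x : ℤ, (Ring.choose (x - m1) n : ℤ)
          = ∑ ij ∈ Finset.HasAntidiagonal.antidiagonal n, Ring.choose x ij.1 * Ring.choose (-m1) ij.2 := by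
        intro x
        rw [sub_eq_add_neg, Ring.add_choose_eq n (Commute.all _ _)]
      calc ∑ x ∈ S, f x * ((Ring.choose (x - m1) n : ℤ) : k)
          = ∑ ij ∈ Finset.HasAntidiagonal.antidiagonal n, ((Ring.choose (-m1) ij.2 : ℤ) : k) *
              (∑ x ∈ S, f x * ((Ring.choose x ij.1 : ℤ) : k)) := by
            simp_rw [hch, Int.cast_sum, Finset.mul_sum, Int.cast_mul]
            rw [Finset.sum_comm]
            apply Finset.sum_congr rfl
            intro x _
            apply Finset.sum_congr rfl
            intro ij _
            ring
        _ = 0 := by simp [h]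
    have key : f M = 0 := by
      have h1 := comb d
      rw [Finset.sum_eq_single M (fun x hx hxM => by
          have hx1 : x ≤ M := S.le_max' x hx
          have hx2 : m1 ≤ x := S.min'_le x hx
          rw [hcast x hx, Nat.choose_eq_zero_of_lt (by omega)]
          simp) (fun h => absurd hMS h)] at h1
      rw [hcast M hMS, show (M - m1).toNat = d from rfl, Nat.choose_self] at h1
      simpa using h1
    rcases eq_or_ne m M with rfl | hne
    · exact key
    · refine ih (S.erase M) (Finset.erase_ssubset hMS) ?_ m (Finset.mem_erase.mpr ⟨hne, hm⟩)
      intro n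
      have := h n
      rw [← Finset.add_sum_erase S _ hMS] at this
      simpa [key] using this

/-- **Vanishing of all Hasse derivatives at a unit detects the zero Laurent polynomial.**
Let `k` be a commutative ring, `(D_n)` a family of Hasse derivatives on `k[T,T⁻¹]`
(`k`-linear maps with `D_n(T^m) = binom(m,n)·T^(m−n)`), `a ∈ k` a unit, and
`φ : k[T,T⁻¹] → k` a `k`-algebra homomorphism with `φ(T) = a`.  If `φ(D_n(p)) = 0` for all
`n`, then `p = 0`. -/
theorem laurent_poly_eq_zero_of_hasse_derivs_vanish
    (k : Type) [CommRing k]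
    (D : ℕ → (LaurentPolynomial k →ₗ[k] LaurentPolynomial k))
    (hD : ∀ (n : ℕ) (m : ℤ),
      D n (T m) = ((Ring.choose m n : ℤ) : k) • T (m - n))
    (a : k) (ha : IsUnit a)
    (φ : LaurentPolynomial k →ₐ[k] k) (hφ : φ (T 1) = a)
    (p : LaurentPolynomial k) (hp : ∀ n : ℕ, φ (D n p) = 0) :
    p = 0 := by
  classical
  set ψ : ℤ → k := fun m => φ (T m) with hψ
  have hψ_mul : ∀ m n : ℤ, ψ (m + n) = ψ m * ψ n := fun m n => by
    simp only [hψ, T_add, map_mul]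
  have hψ_unit : ∀ m : ℤ, IsUnit (ψ m) := fun m => by
    apply IsUnit.of_mul_eq_one (ψ (-m))
    rw [← hψ_mul, add_neg_cancel]
    simp [hψ, T_zero]
  have hsm : ∀ (c : k) (q : LaurentPolynomial k), C c * q = c • q := fun c q => by
    rw [C_eq_algebraMap, ← Algebra.smul_def]
  have hrep : p = ∑ m ∈ p.coeff.support, C (p.coeff m) * T m := by
    conv_lhs => rw [← AddMonoidAlgebra.sum_coeff_single p]
    rw [Finsupp.sum]
    exact Finset.sum_congr rfl fun m _ => single_eq_C_mul_T _ _
  have hDnp : ∀ n : ℕ,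
      φ (D n p) = ∑ m ∈ p.coeff.support, p.coeff m * ((Ring.choose m n : ℤ) : k) * ψ (m - n) := by
    intro n
    conv_lhs => rw [hrep]
    rw [map_sum, map_sum]
    apply Finset.sum_congr rfl
    intro m _
    rw [hsm, map_smul, hD n m, map_smul, map_smul]
    simp only [smul_eq_mul, hψ]
    ring
  have hsum : ∀ n : ℕ,
      ∑ m ∈ p.coeff.support, (p.coeff m * ψ m) * ((Ring.choose m n : ℤ) : k) = 0 := by
    intro n
    have h0 := hp n
    rw [hDnp n] at h0
    calc ∑ m ∈ p.coeff.support, (p.coeff m * ψ m) * ((Ring.choose m n : ℤ) : k)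
        = (∑ m ∈ p.coeff.support, p.coeff m * ((Ring.choose m n : ℤ) : k) * ψ (m - n)) * ψ n := by
          rw [Finset.sum_mul]
          apply Finset.sum_congr rfl
          intro m _
          have hm : ψ (m - n) * ψ n = ψ m := by
            rw [← hψ_mul]; norm_num
          rw [← hm]; ring
      _ = 0 := by rw [h0, zero_mul]
  have hmain := core_vanish p.coeff.support (fun m => p.coeff m * ψ m) hsum
  have hz : ∀ m ∈ p.coeff.support, p.coeff m = 0 := by
    intro m hm
    have h2 : p.coeff m * ψ m = 0 := hmain m hm
    exact ((hψ_unit m).mul_right_eq_zero).mp (by rwa [mul_comm] at h2)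
  exact LaurentPolynomial.ext fun m => by
    by_cases hm : m ∈ p.coeff.support
    · exact hz m hm
    · exact Finsupp.notMem_support_iff.mp hm
end

section
/- Work over the field ℤ/2. Let p ∈ (ℤ/2)[t] be a polynomial with p.eval(1) = 0, and let (q_n)_{n ≥ 1} be a sequence of polynomials in (ℤ/2)[t] satisfying (1 + t)·q_1 = p and (1 + t)·q_{n+1} = q_n + C(q_n.eval(1)) for all n ≥ 1, where C(c) denotes the constant polynomial c (note that over ℤ/2 one has 1 − t = 1 + t, so q_1 = p/(1−t) and q_{n+1} = (q_n(1) − q_n)/(1−t)). Then for every n ≥ 1, q_n.eval(1) = (hasseDeriv n p).eval(1). -/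
open Polynomial

lemma key_step (f g : Polynomial (ZMod 2)) (h : (1 + X) * g = f) (m : ℕ) :
    (hasseDeriv m g).eval 1 = (hasseDeriv (m + 1) f).eval 1 := by
  subst h
  rw [hasseDeriv_mul]
  rw [Polynomial.eval_finset_sum]
  rw [Finset.sum_eq_single (1, m)]
  · simp [hasseDeriv_one', map_add]
  · rintro ⟨i, j⟩ hij hne
    rw [Finset.HasAntidiagonal.mem_antidiagonal] at hij
    rcases i with _ | _ | i
    · simp only [hasseDeriv_zero']
      have : (1 + X : Polynomial (ZMod 2)).eval 1 = 0 := by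
        simp; decide
      simp [this]
    · exfalso
      have hj : j = m := by omega
      subst hj
      exact hne rfl
    · have : hasseDeriv (i + 2) (1 + X : Polynomial (ZMod 2)) = 0 := by
        rw [map_add, hasseDeriv_apply_one _ (by omega), hasseDeriv_X _ (by omega), add_zero]
      simp [this]
  · intro h
    exact absurd (Finset.HasAntidiagonal.mem_antidiagonal.2 (by omega)) h

/-- **The inductively defined polynomials `q_n` compute Hasse derivatives at `1`.**
Over `ℤ/2`, let `p` be a polynomial with `p.eval 1 = 0` and let `(q_n)_{n ≥ 1}` satisfy
`(1 + X)·q₁ = p` and `(1 + X)·q_{n+1} = q_n + C (q_n.eval 1)` for `n ≥ 1` (over `ℤ/2`,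
`1 − t = 1 + t`).  Then `q_n.eval 1 = (hasseDeriv n p).eval 1` for every `n ≥ 1`. -/
theorem eval_one_of_inductive_quotients_eq_hasseDeriv
    (p : Polynomial (ZMod 2)) (hp : p.eval 1 = 0)
    (q : ℕ → Polynomial (ZMod 2))
    (hq1 : (1 + X) * q 1 = p)
    (hq : ∀ n : ℕ, 1 ≤ n → (1 + X) * q (n + 1) = q n + C ((q n).eval 1)) :
    ∀ n : ℕ, 1 ≤ n → (q n).eval 1 = (Polynomial.hasseDeriv n p).eval 1 := by
  have main : ∀ n : ℕ, 1 ≤ n → ∀ m : ℕ,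
      (hasseDeriv m (q n)).eval 1 = (hasseDeriv (m + n) p).eval 1 := by
    intro n hn
    induction n with
    | zero => omega
    | succ n ih =>
      intro m
      rcases Nat.lt_or_ge n 1 with h1 | h1
      · interval_cases n
        exact key_step p (q 1) hq1 m
      · have hrec := hq n h1
        have := key_step _ (q (n + 1)) hrec m
        rw [this, map_add, eval_add, hasseDeriv_C _ _ (Nat.succ_pos m), eval_zero, add_zero,
          ih h1 (m + 1)]
        ring_nf
  intro n hn
  have := main n hn 0
  rwa [hasseDeriv_zero', zero_add] at this
end
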